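/- Let d ≥ 1 be an integer, c ≥ 0 a real number, X a symmetric positive definite d×d real matrix, and Θ, Θ' nonempty compact subsets of ℝ^d such that: for every θ ∈ Θ there exists θ' ∈ Θ' with ‖θ − θ'‖_X ≤ c, and for every θ' ∈ Θ' there exists θ ∈ Θ with ‖θ − θ'‖_X ≤ c. Then for every u ∈ ℝ^d: (i) | max_{θ∈Θ} ⟨u, θ⟩ − max_{θ'∈Θ'} ⟨u, θ'⟩ | ≤ c·‖u‖_{X⁻¹}; (ii) | min_{θ∈Θ} ⟨u, θ⟩ − min_{θ'∈Θ'} ⟨u, θ'⟩ | ≤ c·‖u‖_{X⁻¹}; and (iii) for every H ≥ 0, | ( max_{θ∈Θ} clip_{[0,H]}⟨u, θ⟩ − min_{θ∈Θ} clip_{[0,H]}⟨u, θ⟩ ) − ( max_{θ'∈Θ'} clip_{[0,H]}⟨u, θ'⟩ − min_{θ'∈Θ'} clip_{[0,H]}⟨u, θ'⟩ ) | ≤ 2c·‖u‖_{X⁻¹}. -/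

import Mathlib

open Matrix Finset

/-- Norm weighted by a (positive semidefinite) matrix `M`: `‖x‖_M = √(xᵀ M x)`. -/
noncomputable def mnorm {d : ℕ} (M : Matrix (Fin d) (Fin d) ℝ) (x : Fin d → ℝ) : ℝ :=
  Real.sqrt (x ⬝ᵥ M.mulVec x)

/-- Clipping to the interval `[0, H]`. -/
noncomputable def clip (H x : ℝ) : ℝ := max 0 (min H x)

lemma mnorm_nonneg {d : ℕ} (M : Matrix (Fin d) (Fin d) ℝ) (x : Fin d → ℝ) :
    0 ≤ mnorm M x := Real.sqrt_nonneg _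

/-- Cauchy–Schwarz for a positive semidefinite matrix. -/
lemma cs_psd {d : ℕ} {M : Matrix (Fin d) (Fin d) ℝ} (hM : M.PosSemidef)
    (x y : Fin d → ℝ) : |x ⬝ᵥ M.mulVec y| ≤ mnorm M x * mnorm M y := by
  have hsymm : ∀ a b : Fin d → ℝ, a ⬝ᵥ M.mulVec b = b ⬝ᵥ M.mulVec a := by
    intro a b
    have hMt : Mᵀ = M := by
      have := hM.isHermitian
      simpa [Matrix.IsHermitian, Matrix.conjTranspose_eq_transpose_of_trivial] using this
    rw [Matrix.dotProduct_mulVec, ← Matrix.mulVec_transpose, hMt, dotProduct_comm]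
  have key : ∀ t : ℝ, 0 ≤ (y ⬝ᵥ M.mulVec y) * (t * t) + (2 * (x ⬝ᵥ M.mulVec y)) * t
      + x ⬝ᵥ M.mulVec x := by
    intro t
    have h0 : 0 ≤ (x + t • y) ⬝ᵥ M.mulVec (x + t • y) := by simpa using hM.dotProduct_mulVec_nonneg (x + t • y)
    have hexp : (x + t • y) ⬝ᵥ M.mulVec (x + t • y)
        = (y ⬝ᵥ M.mulVec y) * (t * t) + (2 * (x ⬝ᵥ M.mulVec y)) * t + x ⬝ᵥ M.mulVec x := by
      rw [Matrix.mulVec_add, Matrix.mulVec_smul, add_dotProduct,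
        dotProduct_add, dotProduct_add, smul_dotProduct,
        dotProduct_smul, smul_dotProduct, dotProduct_smul,
        hsymm y x]
      simp only [smul_eq_mul]
      ring
    rw [hexp] at h0
    exact h0
  have hdisc := discrim_le_zero key
  rw [discrim] at hdisc
  have hsq : (x ⬝ᵥ M.mulVec y) ^ 2 ≤ (x ⬝ᵥ M.mulVec x) * (y ⬝ᵥ M.mulVec y) := by
    nlinarith [hdisc]
  have hx0 : 0 ≤ x ⬝ᵥ M.mulVec x := by simpa using hM.dotProduct_mulVec_nonneg x
  have hy0 : 0 ≤ y ⬝ᵥ M.mulVec y := by simpa using hM.dotProduct_mulVec_nonneg y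
  have : |x ⬝ᵥ M.mulVec y| = Real.sqrt ((x ⬝ᵥ M.mulVec y) ^ 2) := by
    rw [Real.sqrt_sq_eq_abs]
  rw [this, mnorm, mnorm, ← Real.sqrt_mul hx0]
  exact Real.sqrt_le_sqrt hsq

/-- Key inequality: `|⟨u, θ⟩ - ⟨u, θ'⟩| ≤ ‖u‖_{X⁻¹} ‖θ - θ'‖_X`. -/
lemma key_ineq {d : ℕ} {X : Matrix (Fin d) (Fin d) ℝ} (hX : X.PosDef)
    (u θ θ' : Fin d → ℝ) :
    |u ⬝ᵥ θ - u ⬝ᵥ θ'| ≤ mnorm X⁻¹ u * mnorm X (θ - θ') := by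
  have hXt : Xᵀ = X := by
    have := hX.isHermitian
    simpa [Matrix.IsHermitian, Matrix.conjTranspose_eq_transpose_of_trivial] using this
  have hdet : IsUnit X.det := hX.det_pos.ne'.isUnit
  have hinv : X * X⁻¹ = 1 := Matrix.mul_nonsing_inv X hdet
  have hinv' : X⁻¹ * X = 1 := Matrix.nonsing_inv_mul X hdet
  set v := θ - θ' with hv
  have h1 : u ⬝ᵥ θ - u ⬝ᵥ θ' = u ⬝ᵥ v := by
    rw [hv, dotProduct_sub]
  have h2 : u ⬝ᵥ v = (X⁻¹.mulVec u) ⬝ᵥ X.mulVec v := by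
    rw [Matrix.dotProduct_mulVec, ← Matrix.mulVec_transpose, hXt,
      Matrix.mulVec_mulVec, hinv, Matrix.one_mulVec]
  have h3 : mnorm X (X⁻¹.mulVec u) = mnorm X⁻¹ u := by
    unfold mnorm
    congr 1
    rw [Matrix.mulVec_mulVec, hinv, Matrix.one_mulVec, Matrix.dotProduct_mulVec,
      ← Matrix.mulVec_transpose]
    have hXit : X⁻¹ᵀ = X⁻¹ := by rw [Matrix.transpose_nonsing_inv, hXt]
    rw [hXit, dotProduct_comm]
  calc |u ⬝ᵥ θ - u ⬝ᵥ θ'| = |(X⁻¹.mulVec u) ⬝ᵥ X.mulVec v| := by rw [h1, h2]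
    _ ≤ mnorm X (X⁻¹.mulVec u) * mnorm X v := cs_psd hX.posSemidef _ _
    _ = mnorm X⁻¹ u * mnorm X v := by rw [h3]

/-- If two nonempty bounded sets of reals are mutually `ε`-close pointwise,
their suprema and infima are `ε`-close. -/
lemma sSup_sInf_close {A B : Set ℝ} (hA : A.Nonempty) (hB : B.Nonempty)
    (hAa : BddAbove A) (hBa : BddAbove B) (hAb : BddBelow A) (hBb : BddBelow B)
    {ε : ℝ} (h1 : ∀ a ∈ A, ∃ b ∈ B, |a - b| ≤ ε) (h2 : ∀ b ∈ B, ∃ a ∈ A, |a - b| ≤ ε) :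
    |sSup A - sSup B| ≤ ε ∧ |sInf A - sInf B| ≤ ε := by
  constructor
  · rw [abs_sub_le_iff]
    constructor
    · rw [sub_le_iff_le_add]
      apply csSup_le hA
      intro a ha
      obtain ⟨b, hb, hab⟩ := h1 a ha
      have : a ≤ b + ε := by cases abs_sub_le_iff.1 hab; linarith
      exact this.trans (by linarith [le_csSup hBa hb])
    · rw [sub_le_iff_le_add]
      apply csSup_le hB
      intro b hb
      obtain ⟨a, ha, hab⟩ := h2 b hb
      have : b ≤ a + ε := by cases abs_sub_le_iff.1 hab; linarith
      exact this.trans (by linarith [le_csSup hAa ha])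
  · have hAB : sInf A - ε ≤ sInf B := by
      apply le_csInf hB
      intro b hb
      obtain ⟨a, ha, hab⟩ := h2 b hb
      obtain ⟨hab1, hab2⟩ := abs_sub_le_iff.1 hab
      linarith [csInf_le hAb ha]
    have hBA : sInf B - ε ≤ sInf A := by
      apply le_csInf hA
      intro a ha
      obtain ⟨b, hb, hab⟩ := h1 a ha
      obtain ⟨hab1, hab2⟩ := abs_sub_le_iff.1 hab
      linarith [csInf_le hBb hb]
    rw [abs_sub_le_iff]
    constructor <;> linarith

lemma clip_lipschitz (H a b : ℝ) : |clip H a - clip H b| ≤ |a - b| := by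
  unfold clip
  refine (abs_max_sub_max_le_max 0 (min H a) 0 (min H b)).trans ?_
  refine max_le (by simp [abs_nonneg]) ?_
  refine (abs_min_sub_min_le_max H a H b).trans ?_
  refine max_le (by simp [abs_nonneg]) le_rfl

/-- If the nonempty compact sets `Θ` and `Θ'` are mutually `c`-close in the
`‖·‖_X` norm, then for any vector `u` their maxima, minima, and clipped
max-minus-min gaps of `θ ↦ ⟨u, θ⟩` are close, at scale `c‖u‖_{X⁻¹}`.
(The maxima/minima, attained by compactness, are expressed via `sSup`/`sInf`
of the image sets.) -/
theorem confidence_set_value_closeness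
    {d : ℕ} (hd : 1 ≤ d) (c : ℝ) (hc : 0 ≤ c)
    (X : Matrix (Fin d) (Fin d) ℝ) (hX : X.PosDef)
    (Θ Θ' : Set (Fin d → ℝ))
    (hΘne : Θ.Nonempty) (hΘ'ne : Θ'.Nonempty)
    (hΘcpt : IsCompact Θ) (hΘ'cpt : IsCompact Θ')
    (hforward : ∀ θ ∈ Θ, ∃ θ' ∈ Θ', mnorm X (θ - θ') ≤ c)
    (hbackward : ∀ θ' ∈ Θ', ∃ θ ∈ Θ, mnorm X (θ - θ') ≤ c) :
    ∀ u : Fin d → ℝ,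
      |sSup ((fun θ => u ⬝ᵥ θ) '' Θ) - sSup ((fun θ => u ⬝ᵥ θ) '' Θ')| ≤ c * mnorm X⁻¹ u ∧
      |sInf ((fun θ => u ⬝ᵥ θ) '' Θ) - sInf ((fun θ => u ⬝ᵥ θ) '' Θ')| ≤ c * mnorm X⁻¹ u ∧
      ∀ H : ℝ, 0 ≤ H →
        |(sSup ((fun θ => clip H (u ⬝ᵥ θ)) '' Θ) - sInf ((fun θ => clip H (u ⬝ᵥ θ)) '' Θ))
          - (sSup ((fun θ => clip H (u ⬝ᵥ θ)) '' Θ') - sInf ((fun θ => clip H (u ⬝ᵥ θ)) '' Θ'))|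
          ≤ 2 * c * mnorm X⁻¹ u := by
  intro u
  have hcont : Continuous fun θ : Fin d → ℝ => u ⬝ᵥ θ := by
    unfold dotProduct
    exact continuous_finset_sum _ fun i _ => (continuous_const.mul (continuous_apply i))
  have hmn : 0 ≤ mnorm X⁻¹ u := mnorm_nonneg _ _
  have hε : (0:ℝ) ≤ c * mnorm X⁻¹ u := mul_nonneg hc hmn
  -- pointwise closeness for the linear function
  have hclose : ∀ θ ∈ Θ, ∀ θ' ∈ Θ', mnorm X (θ - θ') ≤ c →
      |u ⬝ᵥ θ - u ⬝ᵥ θ'| ≤ c * mnorm X⁻¹ u := by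
    intro θ hθ θ' hθ' hle
    calc |u ⬝ᵥ θ - u ⬝ᵥ θ'| ≤ mnorm X⁻¹ u * mnorm X (θ - θ') := key_ineq hX u θ θ'
      _ ≤ mnorm X⁻¹ u * c := by apply mul_le_mul_of_nonneg_left hle hmn
      _ = c * mnorm X⁻¹ u := mul_comm _ _
  -- part 1 & 2
  have hlin := sSup_sInf_close (A := (fun θ => u ⬝ᵥ θ) '' Θ) (B := (fun θ => u ⬝ᵥ θ) '' Θ')
    (hΘne.image _) (hΘ'ne.image _)
    (hΘcpt.image hcont).bddAbove (hΘ'cpt.image hcont).bddAbove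
    (hΘcpt.image hcont).bddBelow (hΘ'cpt.image hcont).bddBelow
    (by
      rintro a ⟨θ, hθ, rfl⟩
      obtain ⟨θ', hθ', hle⟩ := hforward θ hθ
      exact ⟨u ⬝ᵥ θ', ⟨θ', hθ', rfl⟩, hclose θ hθ θ' hθ' hle⟩)
    (by
      rintro b ⟨θ', hθ', rfl⟩
      obtain ⟨θ, hθ, hle⟩ := hbackward θ' hθ'
      exact ⟨u ⬝ᵥ θ, ⟨θ, hθ, rfl⟩, hclose θ hθ θ' hθ' hle⟩)
  refine ⟨hlin.1, hlin.2, ?_⟩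
  -- part 3
  intro H hH
  have hcontc : Continuous fun θ : Fin d → ℝ => clip H (u ⬝ᵥ θ) := by
    unfold clip
    exact continuous_const.max (continuous_const.min hcont)
  have hclip := sSup_sInf_close (A := (fun θ => clip H (u ⬝ᵥ θ)) '' Θ)
    (B := (fun θ => clip H (u ⬝ᵥ θ)) '' Θ')
    (hΘne.image _) (hΘ'ne.image _)
    (hΘcpt.image hcontc).bddAbove (hΘ'cpt.image hcontc).bddAbove
    (hΘcpt.image hcontc).bddBelow (hΘ'cpt.image hcontc).bddBelow
    (by
      rintro a ⟨θ, hθ, rfl⟩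
      obtain ⟨θ', hθ', hle⟩ := hforward θ hθ
      exact ⟨clip H (u ⬝ᵥ θ'), ⟨θ', hθ', rfl⟩,
        (clip_lipschitz H _ _).trans (hclose θ hθ θ' hθ' hle)⟩)
    (by
      rintro b ⟨θ', hθ', rfl⟩
      obtain ⟨θ, hθ, hle⟩ := hbackward θ' hθ'
      exact ⟨clip H (u ⬝ᵥ θ), ⟨θ, hθ, rfl⟩,
        (clip_lipschitz H _ _).trans (hclose θ hθ θ' hθ' hle)⟩)
  obtain ⟨hs, hi⟩ := hclip
  rw [abs_sub_le_iff] at hs hi ⊢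
  constructor <;> [nlinarith [hs.1, hi.2, hε]; nlinarith [hs.2, hi.1, hε]]
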